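/- For z = x + iy with x ∈ ℝ⁴ and y in the closed forward lightcone of Minkowski space, and for any unit future-pointing timelike vector t and nonzero null future-pointing vector l, the following inequalities hold: 1 ≤ (1 + y⁰ − |ȳ|)² + θ(x·x)(|x⁰| − |x̄|)² ≤ |1 − i z·l/(t·l)|² ≤ (1 + y⁰ + |ȳ|)² + (|x⁰| + |x̄|)², where y⁰ = y·t, |ȳ| = √((y·t)² − y·y) (similarly for x), and θ is the Heaviside step function. -/

import Mathlib

/-- Minkowski scalar product on ℝ⁴ with signature (+,-,-,-). -/
def mdot (a b : Fin 4 → ℝ) : ℝ :=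
  a 0 * b 0 - a 1 * b 1 - a 2 * b 2 - a 3 * b 3

lemma tangent_null (l w : Fin 4 → ℝ) (hl : mdot l l = 0) (hl0 : 0 < l 0)
    (hw : mdot w l = 0) : mdot w w ≤ 0 := by
  simp only [mdot] at *
  have e0 : w 0 * l 0 = w 1 * l 1 + w 2 * l 2 + w 3 * l 3 := by linarith
  have e1 : w 0 ^ 2 * l 0 ^ 2 = (w 1 * l 1 + w 2 * l 2 + w 3 * l 3) ^ 2 := by
    rw [← e0]; ring
  have hlag : (w 1 * l 1 + w 2 * l 2 + w 3 * l 3) ^ 2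
      ≤ (w 1 ^ 2 + w 2 ^ 2 + w 3 ^ 2) * (l 1 ^ 2 + l 2 ^ 2 + l 3 ^ 2) := by
    nlinarith [sq_nonneg (w 1 * l 2 - w 2 * l 1), sq_nonneg (w 1 * l 3 - w 3 * l 1),
      sq_nonneg (w 2 * l 3 - w 3 * l 2)]
  have hl2 : l 1 ^ 2 + l 2 ^ 2 + l 3 ^ 2 = l 0 ^ 2 := by nlinarith [hl]
  nlinarith [e1, hlag, hl2, mul_pos hl0 hl0]

lemma key (t l a : Fin 4 → ℝ) (ht : mdot t t = 1)
    (hl : mdot l l = 0) (hl0 : 0 < l 0) :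
    (mdot a l) ^ 2 - 2 * (mdot a t) * (mdot a l) * (mdot t l)
      + (mdot a a) * (mdot t l) ^ 2 ≤ 0 := by
  set w : Fin 4 → ℝ := fun i => mdot t l * a i - mdot a l * t i with hwdef
  have hwl : mdot w l = 0 := by simp only [mdot, hwdef]; ring
  have hww := tangent_null l w hl hl0 hwl
  have hexp : mdot w w = (mdot t l) ^ 2 * mdot a a
      - 2 * (mdot t l) * (mdot a l) * (mdot a t) + (mdot a l) ^ 2 * mdot t t := by
    simp only [mdot, hwdef]; ring
  rw [ht] at hexp
  nlinarith [hexp ▸ hww]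

lemma nonneg_of_mul_sq_nonneg (a T : ℝ) (hT : 0 < T) (h : 0 ≤ a * T ^ 2) : 0 ≤ a := by
  have hT2 : (0:ℝ) < T ^ 2 := pow_pos hT 2
  nlinarith

lemma aux_bounds (T X Y P R yy xx : ℝ) (hT : 0 < T) (hP : 0 ≤ P) (hyy : 0 ≤ yy)
    (hkeyy : Y ^ 2 - 2 * P * Y * T + yy * T ^ 2 ≤ 0)
    (hkeyx : X ^ 2 - 2 * R * X * T + xx * T ^ 2 ≤ 0) :
    1 ≤ (1 + P - Real.sqrt (P ^ 2 - yy)) ^ 2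
        + (if 0 ≤ xx then (1 : ℝ) else 0) * (|R| - Real.sqrt (R ^ 2 - xx)) ^ 2 ∧
    (1 + P - Real.sqrt (P ^ 2 - yy)) ^ 2
        + (if 0 ≤ xx then (1 : ℝ) else 0) * (|R| - Real.sqrt (R ^ 2 - xx)) ^ 2
      ≤ (1 + Y / T) ^ 2 + (X / T) ^ 2 ∧
    (1 + Y / T) ^ 2 + (X / T) ^ 2
      ≤ (1 + P + Real.sqrt (P ^ 2 - yy)) ^ 2 + (|R| + Real.sqrt (R ^ 2 - xx)) ^ 2 := by
  have hT2 : (0:ℝ) < T ^ 2 := pow_pos hT 2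
  have hPy : 0 ≤ P ^ 2 - yy := by
    refine nonneg_of_mul_sq_nonneg _ _ hT ?_
    have e : (P ^ 2 - yy) * T ^ 2
        = (Y - P * T) ^ 2 - (Y ^ 2 - 2 * P * Y * T + yy * T ^ 2) := by ring
    rw [e]
    linarith [sq_nonneg (Y - P * T)]
  have hRx : 0 ≤ R ^ 2 - xx := by
    refine nonneg_of_mul_sq_nonneg _ _ hT ?_
    have e : (R ^ 2 - xx) * T ^ 2
        = (X - R * T) ^ 2 - (X ^ 2 - 2 * R * X * T + xx * T ^ 2) := by ring
    rw [e]
    linarith [sq_nonneg (X - R * T)]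
  obtain ⟨Q, hQd⟩ : ∃ q, q = Real.sqrt (P ^ 2 - yy) := ⟨_, rfl⟩
  obtain ⟨S, hSd⟩ : ∃ s, s = Real.sqrt (R ^ 2 - xx) := ⟨_, rfl⟩
  rw [← hQd, ← hSd]
  have hQ0 : 0 ≤ Q := hQd ▸ Real.sqrt_nonneg _
  have hS0 : 0 ≤ S := hSd ▸ Real.sqrt_nonneg _
  have hQsq : Q ^ 2 = P ^ 2 - yy := by rw [hQd]; exact Real.sq_sqrt hPy
  have hSsq : S ^ 2 = R ^ 2 - xx := by rw [hSd]; exact Real.sq_sqrt hRx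
  have hQP : Q ≤ P := by
    rw [hQd]
    exact (Real.sqrt_le_sqrt (by linarith)).trans_eq (Real.sqrt_sq hP)
  obtain ⟨u, hud⟩ : ∃ u, u = Y / T := ⟨_, rfl⟩
  obtain ⟨v, hvd⟩ : ∃ v, v = X / T := ⟨_, rfl⟩
  rw [← hud, ← hvd]
  have huT : (u - P) ^ 2 * T ^ 2 = (Y - P * T) ^ 2 := by
    rw [hud]; field_simp
  have hvT : (v - R) ^ 2 * T ^ 2 = (X - R * T) ^ 2 := by
    rw [hvd]; field_simp
  have stepy : (Y - P * T) ^ 2 ≤ Q ^ 2 * T ^ 2 := by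
    calc (Y - P * T) ^ 2
        = (Y ^ 2 - 2 * P * Y * T + yy * T ^ 2) + (P ^ 2 - yy) * T ^ 2 := by ring
      _ ≤ (P ^ 2 - yy) * T ^ 2 := by linarith
      _ = Q ^ 2 * T ^ 2 := by rw [hQsq]
  have stepx : (X - R * T) ^ 2 ≤ S ^ 2 * T ^ 2 := by
    calc (X - R * T) ^ 2
        = (X ^ 2 - 2 * R * X * T + xx * T ^ 2) + (R ^ 2 - xx) * T ^ 2 := by ring
      _ ≤ (R ^ 2 - xx) * T ^ 2 := by linarith
      _ = S ^ 2 * T ^ 2 := by rw [hSsq]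
  have hu2 : (u - P) ^ 2 ≤ Q ^ 2 :=
    (mul_le_mul_iff_of_pos_right hT2).mp (by rw [huT]; exact stepy)
  have hv2 : (v - R) ^ 2 ≤ S ^ 2 :=
    (mul_le_mul_iff_of_pos_right hT2).mp (by rw [hvT]; exact stepx)
  have huabs : |u - P| ≤ Q := by
    have h := Real.sqrt_le_sqrt hu2
    rwa [Real.sqrt_sq_eq_abs, Real.sqrt_sq hQ0] at h
  have hvabs : |v - R| ≤ S := by
    have h := Real.sqrt_le_sqrt hv2
    rwa [Real.sqrt_sq_eq_abs, Real.sqrt_sq hS0] at h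
  have hul : P - Q ≤ u := by have := abs_le.mp huabs; linarith [this.1]
  have huu : u ≤ P + Q := by have := abs_le.mp huabs; linarith [this.2]
  have hu0 : 0 ≤ u := le_trans (by linarith) hul
  have hvle : |v| ≤ |R| + S := by
    have h1 : |v| - |R| ≤ |v - R| := abs_sub_abs_le_abs_sub v R
    linarith
  have hvge : |R| - S ≤ |v| := by
    have h1 : |R| - |v| ≤ |R - v| := abs_sub_abs_le_abs_sub R v
    rw [abs_sub_comm] at h1
    linarith
  have hsq1 : (1 + P - Q) ^ 2 ≤ (1 + u) ^ 2 :=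
    pow_le_pow_left₀ (by linarith) (by linarith) 2
  have hsq3 : (1 + u) ^ 2 ≤ (1 + P + Q) ^ 2 :=
    pow_le_pow_left₀ (by linarith) (by linarith) 2
  have hv2le : v ^ 2 ≤ (|R| + S) ^ 2 := by
    have := pow_le_pow_left₀ (abs_nonneg v) hvle 2
    rwa [sq_abs] at this
  refine ⟨?_, ?_, ?_⟩
  · have h1 : 1 ≤ (1 + P - Q) ^ 2 := by
      have h := pow_le_pow_left₀ zero_le_one (show (1:ℝ) ≤ 1 + P - Q by linarith) 2
      simpa using h
    split_ifs with hx
    · have := sq_nonneg (|R| - S)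
      linarith
    · linarith
  · split_ifs with hx
    · have hSR : S ≤ |R| := by
        rw [hSd, ← Real.sqrt_sq_eq_abs R]
        exact Real.sqrt_le_sqrt (by linarith)
      have h1 : (|R| - S) ^ 2 ≤ v ^ 2 := by
        have := pow_le_pow_left₀ (by linarith : (0:ℝ) ≤ |R| - S) hvge 2
        rwa [sq_abs] at this
      linarith
    · have := sq_nonneg v
      linarith
  · linarith

/-- For `z = x + iy` with `y` in the closed forward lightcone, `t` a unit
future-pointing timelike vector and `l` a nonzero null future-pointing vector:
`1 ≤ (1 + y⁰ − |ȳ|)² + θ(x·x)(|x⁰| − |x̄|)² ≤ |1 − i z·l/(t·l)|²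
   ≤ (1 + y⁰ + |ȳ|)² + (|x⁰| + |x̄|)²`,
where `y⁰ = y·t`, `|ȳ| = √((y·t)² − y·y)` and similarly for `x`,
and `θ` is the Heaviside step function. -/
theorem lightcone_modulus_bounds (t l x y : Fin 4 → ℝ)
    (ht : mdot t t = 1) (ht0 : 0 < t 0)
    (hl : mdot l l = 0) (hl0 : 0 < l 0) (htl : 0 < mdot t l)
    (hyy : 0 ≤ mdot y y) (hyt : 0 ≤ mdot y t) :
    1 ≤ (1 + mdot y t - Real.sqrt ((mdot y t) ^ 2 - mdot y y)) ^ 2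
        + (if 0 ≤ mdot x x then (1 : ℝ) else 0)
          * (|mdot x t| - Real.sqrt ((mdot x t) ^ 2 - mdot x x)) ^ 2 ∧
    (1 + mdot y t - Real.sqrt ((mdot y t) ^ 2 - mdot y y)) ^ 2
        + (if 0 ≤ mdot x x then (1 : ℝ) else 0)
          * (|mdot x t| - Real.sqrt ((mdot x t) ^ 2 - mdot x x)) ^ 2
      ≤ ‖(1 - Complex.I *
          (((mdot x l : ℂ) + Complex.I * (mdot y l : ℂ)) / (mdot t l : ℂ)))‖ ^ 2 ∧
    ‖(1 - Complex.I *
          (((mdot x l : ℂ) + Complex.I * (mdot y l : ℂ)) / (mdot t l : ℂ)))‖ ^ 2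
      ≤ (1 + mdot y t + Real.sqrt ((mdot y t) ^ 2 - mdot y y)) ^ 2
        + (|mdot x t| + Real.sqrt ((mdot x t) ^ 2 - mdot x x)) ^ 2 := by
  have hkeyy := key t l y ht hl hl0
  have hkeyx := key t l x ht hl hl0
  have hky : (mdot y l) ^ 2 - 2 * (mdot y t) * (mdot y l) * (mdot t l)
      + (mdot y y) * (mdot t l) ^ 2 ≤ 0 := by linarith
  have hkx : (mdot x l) ^ 2 - 2 * (mdot x t) * (mdot x l) * (mdot t l)
      + (mdot x x) * (mdot t l) ^ 2 ≤ 0 := by linarith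
  obtain ⟨h1, h2, h3⟩ := aux_bounds (mdot t l) (mdot x l) (mdot y l) (mdot y t)
    (mdot x t) (mdot y y) (mdot x x) htl hyt hyy (by linarith) (by linarith)
  have hTne : ((mdot t l : ℝ) : ℂ) ≠ 0 := Complex.ofReal_ne_zero.mpr htl.ne'
  have habs : ‖(1 - Complex.I *
      (((mdot x l : ℂ) + Complex.I * (mdot y l : ℂ)) / (mdot t l : ℂ)))‖ ^ 2
      = (1 + mdot y l / mdot t l) ^ 2 + (mdot x l / mdot t l) ^ 2 := by
    have hz : (1 - Complex.I * (((mdot x l : ℂ) + Complex.I * (mdot y l : ℂ)) / (mdot t l : ℂ)))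
        = ((1 + mdot y l / mdot t l : ℝ) : ℂ)
          + ((-(mdot x l / mdot t l) : ℝ) : ℂ) * Complex.I := by
      push_cast
      field_simp
      linear_combination (-(mdot y l : ℂ)) * Complex.I_sq
    rw [hz, Complex.sq_norm, Complex.normSq_add_mul_I]
    ring
  rw [habs]
  exact ⟨h1, h2, h3⟩
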